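/- Let H be a Heyting algebra with implication ⇒ and pseudocomplement ¬a := a ⇒ 0, and define a → b := (a ⇒ b) ∧ (¬a ⇒ ¬b). Then ⟨H, ∧, ∨, →, 0, 1⟩ is a connexive Heyting algebra, i.e., it satisfies C1–C5 (with negation x → 0, which coincides with ¬x). -/

import Mathlib

open scoped symmDiff

section Aux

variable {H : Type*} [HeytingAlgebra H]

open Heyting Heyting.Regular

private lemma bihimp_compl_right {B : Type*} [BooleanAlgebra B] (a b : B) :
    a ⇔ bᶜ = (a ⇔ b)ᶜ := by
  rw [compl_bihimp, bihimp_eq', compl_compl, symmDiff_eq, inf_comm b aᶜ]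

private lemma bihimp_aux {B : Type*} [BooleanAlgebra B] (a b c : B) :
    (b ⇔ c) ⇔ (a ⇔ c) = a ⇔ b := by
  rw [bihimp_comm a c, bihimp_assoc, bihimp_bihimp_cancel_left, bihimp_comm b a]

private lemma toReg_inf (a b : H) :
    toRegular (a ⊓ b) = toRegular a ⊓ toRegular b :=
  coe_injective (by simp [compl_compl_inf_distrib])

private lemma toReg_compl (a : H) : toRegular (aᶜ) = (toRegular a)ᶜ :=
  coe_injective (by simp [compl_compl_compl])

private lemma reg_arr (x y : H) :
    toRegular ((x ⇨ y) ⊓ (xᶜ ⇨ yᶜ)) = toRegular x ⇔ toRegular y := by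
  have h : toRegular x ⇔ toRegular y =
      (toRegular x ⇨ toRegular y) ⊓ ((toRegular x)ᶜ ⇨ (toRegular y)ᶜ) := by
    rw [bihimp, compl_himp_compl]
    exact inf_comm _ _
  rw [h]
  refine coe_injective ?_
  simp only [coe_toRegular, coe_inf, coe_himp, coe_compl,
    compl_compl_inf_distrib, compl_compl_himp_distrib, compl_compl_compl]

private lemma himp_trans' (a b c : H) : (a ⇨ b) ⊓ (b ⇨ c) ≤ a ⇨ c := by
  rw [le_himp_iff]
  calc (a ⇨ b) ⊓ (b ⇨ c) ⊓ a = (b ⇨ c) ⊓ ((a ⇨ b) ⊓ a) := by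
        rw [inf_comm (a ⇨ b) (b ⇨ c), inf_assoc]
    _ ≤ (b ⇨ c) ⊓ b := inf_le_inf_left _ himp_inf_le
    _ ≤ c := himp_inf_le

private lemma compl_inf' (a b : H) : (a ⊓ b)ᶜ = a ⇨ bᶜ := by
  rw [← himp_bot, ← himp_bot, himp_himp]

private lemma himp_compl_flip (a b : H) : aᶜ ⇨ bᶜ = bᶜᶜ ⇨ aᶜᶜ := by
  rw [← compl_inf', ← compl_inf', ← compl_compl_compl (aᶜ ⊓ b),
    compl_compl_inf_distrib, compl_compl_compl a, inf_comm]

end Aux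

theorem stmt16 {H : Type*} [HeytingAlgebra H] :
    let arr : H → H → H := fun a b => (a ⇨ b) ⊓ (aᶜ ⇨ bᶜ)
    (∀ x : H, arr x ⊥ = xᶜ) ∧
    (∀ x y z : H, arr (arr x y) (arr (arr y z) (arr x z)) = ⊤) ∧
    (∀ x y : H, arr (arr x y) (arr (arr x (arr y ⊥)) ⊥) = ⊤) ∧
    (∀ x y : H, x ⊓ arr x y = x ⊓ y) ∧
    (∀ x y z : H, arr x y ≤ arr (z ⊓ x) (z ⊓ y)) ∧
    (∀ x y z : H, arr x y ≤ arr (z ⊔ x) (z ⊔ y)) := by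
  intro arr
  open Heyting Heyting.Regular in
  -- basic facts
  have harr_bot : ∀ x : H, arr x ⊥ = xᶜ := by
    intro x; simp only [arr, himp_bot, compl_bot, himp_top, inf_top_eq]
  have hreg : ∀ x y : H, toRegular (arr x y) = toRegular x ⇔ toRegular y :=
    fun x y => reg_arr x y
  -- transitivity: arr x y ⊓ arr y z ≤ arr x z
  have htrans : ∀ x y z : H, arr x y ⊓ arr y z ≤ arr x z := by
    intro x y z
    refine le_inf ?_ ?_
    · exact le_trans (inf_le_inf inf_le_left inf_le_left) (himp_trans' x y z)
    · exact le_trans (inf_le_inf inf_le_right inf_le_right) (himp_trans' xᶜ yᶜ zᶜ)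
  -- euclid: arr x y ⊓ arr x z ≤ (arr y z)ᶜᶜ
  have heuc : ∀ x y z : H, arr x y ⊓ arr x z ≤ (arr y z)ᶜᶜ := by
    intro x y z
    have h1 : toRegular (arr x y ⊓ arr x z) ≤ toRegular (arr y z) := by
      rw [toReg_inf, hreg, hreg, hreg]
      calc toRegular x ⇔ toRegular y ⊓ (toRegular x ⇔ toRegular z)
          = toRegular y ⇔ toRegular x ⊓ (toRegular x ⇔ toRegular z) := by
            rw [show toRegular x ⇔ toRegular y = toRegular y ⇔ toRegular x from bihimp_comm _ _]
        _ ≤ toRegular y ⇔ toRegular z := bihimp_triangle _ _ _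
    calc arr x y ⊓ arr x z ≤ (arr x y ⊓ arr x z)ᶜᶜ := le_compl_compl
      _ ≤ (arr y z)ᶜᶜ := h1
  -- the key top lemma
  have htop : ∀ u v : H, u ≤ v → uᶜ ≤ vᶜ → arr u v = ⊤ := by
    intro u v h1 h2
    exact inf_eq_top_iff.2 ⟨himp_eq_top_iff.2 h1, himp_eq_top_iff.2 h2⟩
  refine ⟨harr_bot, ?_, ?_, ?_, ?_, ?_⟩
  · -- C1
    intro x y z
    have hregeq : toRegular (arr (arr y z) (arr x z)) = toRegular (arr x y) := by
      rw [hreg, hreg, hreg, hreg]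
      exact bihimp_aux _ _ _
    apply htop
    · refine le_inf ?_ ?_
      · exact le_himp_iff.2 (htrans x y z)
      · rw [le_himp_iff]
        have : arr x y ⊓ (arr y z)ᶜ ⊓ arr x z ≤ ⊥ := by
          calc arr x y ⊓ (arr y z)ᶜ ⊓ arr x z
              = arr x y ⊓ arr x z ⊓ (arr y z)ᶜ := by
                rw [inf_assoc, inf_comm ((arr y z)ᶜ), ← inf_assoc]
            _ ≤ (arr y z)ᶜᶜ ⊓ (arr y z)ᶜ := inf_le_inf_right _ (heuc x y z)
            _ ≤ ⊥ := by rw [inf_comm]; exact disjoint_compl_right.le_bot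
        exact le_compl_iff_disjoint_right.2 (disjoint_iff.2 (le_bot_iff.1 this))
    · have h1 : (arr x y)ᶜᶜ = (arr (arr y z) (arr x z))ᶜᶜ := by
        simpa using congrArg Heyting.Regular.val hregeq.symm
      refine le_of_eq ?_
      calc (arr x y)ᶜ = (arr x y)ᶜᶜᶜ := (compl_compl_compl _).symm
        _ = (arr (arr y z) (arr x z))ᶜᶜᶜ := by rw [h1]
        _ = (arr (arr y z) (arr x z))ᶜ := compl_compl_compl _
  · -- C2
    intro x y
    rw [harr_bot, harr_bot]
    have hB : toRegular (arr x yᶜ) = (toRegular (arr x y))ᶜ := by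
      rw [hreg, hreg, toReg_compl]
      exact bihimp_compl_right _ _
    apply htop
    · -- arr x y ≤ (arr x yᶜ)ᶜ
      have hbot : arr x y ⊓ arr x yᶜ ≤ ⊥ := by
        have h1 : toRegular (arr x y ⊓ arr x yᶜ) = ⊥ := by
          rw [toReg_inf, hB]
          exact coe_injective (by
            simp only [Heyting.Regular.coe_inf, Heyting.Regular.coe_compl,
              Heyting.Regular.coe_bot, inf_compl_eq_bot])
        calc arr x y ⊓ arr x yᶜ ≤ (arr x y ⊓ arr x yᶜ)ᶜᶜ := le_compl_compl
          _ = (⊥ : H) := congrArg Heyting.Regular.val h1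
      exact le_compl_iff_disjoint_right.2 (disjoint_iff.2 (le_bot_iff.1 hbot))
    · -- (arr x y)ᶜ ≤ (arr x yᶜ)ᶜᶜ
      have h1 : (arr x yᶜ)ᶜᶜ = (arr x y)ᶜᶜᶜ := by
        have := congrArg Heyting.Regular.val hB
        simpa using this
      rw [h1, compl_compl_compl]
  · -- C3
    intro x y
    refine le_antisymm (le_inf inf_le_left ?_) (le_inf inf_le_left (le_inf ?_ ?_))
    · calc x ⊓ arr x y ≤ x ⊓ (x ⇨ y) := inf_le_inf_left _ inf_le_left
        _ ≤ y := by rw [inf_comm]; exact himp_inf_le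
    · exact le_himp_iff.2 (le_trans inf_le_left inf_le_right)
    · rw [le_himp_iff]
      calc x ⊓ y ⊓ xᶜ ≤ x ⊓ xᶜ := inf_le_inf_right _ inf_le_left
        _ ≤ ⊥ := disjoint_compl_right.le_bot
        _ ≤ yᶜ := bot_le
  · -- C4
    intro x y z
    refine le_inf ?_ ?_
    · rw [le_himp_iff]
      refine le_inf (le_trans inf_le_right inf_le_left) ?_
      calc arr x y ⊓ (z ⊓ x) ≤ (x ⇨ y) ⊓ x :=
          inf_le_inf inf_le_left inf_le_right
        _ ≤ y := himp_inf_le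
    · rw [le_himp_iff]
      have hdisj : arr x y ⊓ (z ⊓ x)ᶜ ⊓ (z ⊓ y) ≤ ⊥ := by
        have hx : arr x y ⊓ (z ⊓ x)ᶜ ⊓ (z ⊓ y) ≤ xᶜ := by
          calc arr x y ⊓ (z ⊓ x)ᶜ ⊓ (z ⊓ y) ≤ (z ⊓ x)ᶜ ⊓ z :=
              inf_le_inf (le_trans inf_le_right le_rfl) inf_le_left
            _ = (z ⇨ xᶜ) ⊓ z := by rw [compl_inf']
            _ ≤ xᶜ := himp_inf_le
        have hy : arr x y ⊓ (z ⊓ x)ᶜ ⊓ (z ⊓ y) ≤ yᶜ := by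
          have h2 : arr x y ⊓ (z ⊓ x)ᶜ ⊓ (z ⊓ y) ≤ (xᶜ ⇨ yᶜ) ⊓ xᶜ :=
            le_inf (le_trans inf_le_left (le_trans inf_le_left inf_le_right)) hx
          exact le_trans h2 himp_inf_le
        calc arr x y ⊓ (z ⊓ x)ᶜ ⊓ (z ⊓ y) ≤ (z ⊓ y) ⊓ yᶜ :=
            le_inf inf_le_right hy
          _ ≤ y ⊓ yᶜ := inf_le_inf_right _ inf_le_right
          _ ≤ ⊥ := disjoint_compl_right.le_bot
      exact le_compl_iff_disjoint_right.2 (disjoint_iff.2 (le_bot_iff.1 hdisj))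
  · -- C5
    intro x y z
    refine le_inf ?_ ?_
    · rw [le_himp_iff, inf_sup_left]
      refine sup_le (le_trans inf_le_right le_sup_left) ?_
      calc arr x y ⊓ x ≤ (x ⇨ y) ⊓ x := inf_le_inf_right _ inf_le_left
        _ ≤ y := himp_inf_le
        _ ≤ z ⊔ y := le_sup_right
    · rw [le_himp_iff, compl_sup, compl_sup]
      refine le_inf (le_trans inf_le_right inf_le_left) ?_
      calc arr x y ⊓ (zᶜ ⊓ xᶜ) ≤ (xᶜ ⇨ yᶜ) ⊓ xᶜ :=
          inf_le_inf inf_le_right inf_le_right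
        _ ≤ yᶜ := himp_inf_le
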